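/- Up to the action of the orthogonal group O(n) on R^n and sign changes of individual vectors, there is exactly one spherical tight frame of n+1 vectors in R^n: if F, G are spherical tight frames of n+1 vectors in R^n, then there exist U ∈ O(n) and signs ε_1,...,ε_{n+1} ∈ {±1} with g_j = ε_j U f_j for all j. -/

import Mathlib

open Finset

lemma frame_signs (n : ℕ) (hn : 1 ≤ n)
    (f : Fin (n + 1) → EuclideanSpace ℝ (Fin n))
    (hf1 : ∀ j, ‖f j‖ = 1)
    (hf : ∀ v : EuclideanSpace ℝ (Fin n),
      ∑ j, (inner ℝ v (f j) : ℝ) ^ 2 = (((n : ℝ) + 1) / n) * ‖v‖ ^ 2) :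
    ∃ s : Fin (n + 1) → ℝ, (∀ j, s j = 1 ∨ s j = -1) ∧
      (∑ j, s j • f j) = 0 ∧
      ∀ i j, i ≠ j → (inner ℝ (s i • f i) (s j • f j) : ℝ) = -(1 / n) := by
  have hn0 : (n : ℝ) ≠ 0 := Nat.cast_ne_zero.mpr (by omega)
  have hnpos : (0:ℝ) < n := by positivity
  set c : ℝ := ((n : ℝ) + 1) / n with hc
  have hcpos : 0 < c := by positivity
  -- polarization
  have hpol : ∀ u v : EuclideanSpace ℝ (Fin n),
      ∑ j, (inner ℝ u (f j) : ℝ) * (inner ℝ v (f j) : ℝ) = c * (inner ℝ u v : ℝ) := by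
    intro u v
    have h1 := hf (u + v)
    have h2 := hf u
    have h3 := hf v
    have e : ∀ j : Fin (n+1), (inner ℝ (u+v) (f j) : ℝ) ^ 2
        = (inner ℝ u (f j) : ℝ)^2 + (inner ℝ v (f j):ℝ)^2
          + 2 * ((inner ℝ u (f j):ℝ) * (inner ℝ v (f j):ℝ)) := by
      intro j; rw [inner_add_left]; ring
    rw [Finset.sum_congr rfl (fun j _ => e j)] at h1
    rw [Finset.sum_add_distrib, Finset.sum_add_distrib, ← Finset.mul_sum] at h1
    have hnorm : ‖u + v‖^2 = ‖u‖^2 + 2 * (inner ℝ u v:ℝ) + ‖v‖^2 := norm_add_sq_real u v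
    rw [hnorm] at h1
    nlinarith [h1, h2, h3]
  set G : Fin (n+1) → Fin (n+1) → ℝ := fun i j => (inner ℝ (f i) (f j) : ℝ) with hG
  have hGdiag : ∀ i, G i i = 1 := by
    intro i; simp only [hG, real_inner_self_eq_norm_sq, hf1 i, one_pow]
  have hGG : ∀ i j, ∑ k, G i k * G j k = c * G i j := fun i j => hpol (f i) (f j)
  -- linear dependence
  have hnli : ¬ LinearIndependent ℝ f := by
    intro h
    have := h.fintype_card_le_finrank
    simp [finrank_euclideanSpace_fin] at this
  obtain ⟨w, hw0, i₀, hi₀⟩ := Fintype.not_linearIndependent_iff.mp hnli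
  have hGw : ∀ i, ∑ k, G i k * w k = 0 := by
    intro i
    have h : (inner ℝ (f i) (∑ k, w k • f k) : ℝ) = 0 := by rw [hw0]; exact inner_zero_right _
    rw [inner_sum] at h
    simp only [real_inner_smul_right] at h
    rw [← h]
    exact Finset.sum_congr rfl fun k _ => mul_comm _ _
  set W : ℝ := ∑ k, (w k)^2 with hWdef
  have hWpos : 0 < W := by
    have h1 : (w i₀)^2 ≤ W := Finset.single_le_sum (fun k _ => sq_nonneg (w k)) (mem_univ i₀)
    have : 0 < (w i₀)^2 := by positivity
    linarith
  set D : Fin (n+1) → Fin (n+1) → ℝ :=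
    fun i k => W * (c * (if i = k then 1 else 0) - G i k) - c * w i * w k with hD
  have hdel : ∀ i : Fin (n+1), ∀ x : Fin (n+1) → ℝ,
      ∑ k, (if i = k then (1:ℝ) else 0) * x k = x i := by
    intro i x; simp
  have step : ∀ i, ∑ k, (D i k)^2 = c^2*W^2 - c*W^2 - c^2*(w i)^2*W := by
    intro i
    have expand : ∀ k, (D i k)^2
        = W^2*c^2*((if i = k then (1:ℝ) else 0))
          - (2*W*c)*((if i = k then (1:ℝ) else 0) * (W * G i k + c * w i * w k))
          + (W^2*(G i k*G i k) + (2*W*c*w i)*(G i k*w k) + c^2*(w i)^2*((w k)^2)) := by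
      intro k; by_cases h : i = k <;> simp only [hD, h, if_pos, if_true, if_neg, ite_false,
        not_false_iff] <;> ring
    rw [Finset.sum_congr rfl (fun k _ => expand k)]
    rw [Finset.sum_add_distrib, Finset.sum_sub_distrib]
    rw [← Finset.mul_sum, ← Finset.mul_sum]
    rw [Finset.sum_add_distrib, Finset.sum_add_distrib, ← Finset.mul_sum, ← Finset.mul_sum,
      ← Finset.mul_sum]
    rw [hdel i (fun k => W * G i k + c * w i * w k), hGG i i, hGw i, hGdiag i, ← hWdef]
    have : ∑ k, (if i = k then (1:ℝ) else 0) = 1 := by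
      simpa using hdel i (fun _ => (1:ℝ))
    rw [this]
    ring
  have tot : ∑ i, ∑ k, (D i k)^2 = 0 := by
    rw [Finset.sum_congr rfl (fun i _ => step i)]
    have e : ∀ i : Fin (n+1), c^2*W^2 - c*W^2 - c^2*(w i)^2*W
        = c^2*W^2 - c*W^2 - (c^2*W)*((w i)^2) := fun i => by ring
    rw [Finset.sum_congr rfl (fun i _ => e i)]
    rw [Finset.sum_sub_distrib, Finset.sum_sub_distrib, Finset.sum_const, Finset.sum_const,
      ← Finset.mul_sum, ← hWdef, Finset.card_univ, Fintype.card_fin, nsmul_eq_mul, nsmul_eq_mul]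
    push_cast
    rw [hc]
    field_simp
    ring
  have hD0 : ∀ i k, D i k = 0 := by
    intro i k
    have h1 := (Finset.sum_eq_zero_iff_of_nonneg
      (fun i _ => Finset.sum_nonneg fun k _ => sq_nonneg (D i k))).mp tot i (mem_univ i)
    have h2 := (Finset.sum_eq_zero_iff_of_nonneg
      (fun k _ => sq_nonneg (D i k))).mp h1 k (mem_univ k)
    exact pow_eq_zero_iff (by norm_num) |>.mp h2
  have hwsq : ∀ i, ((n:ℝ)+1) * (w i)^2 = W := by
    intro i
    have h := hD0 i i
    simp only [hD, eq_self_iff_true, if_true, hGdiag i] at h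
    have : W * (c * 1 - 1) = c * (w i * w i) := by linarith
    rw [hc] at this
    field_simp at this
    nlinarith [this]
  have hGoff : ∀ i k, i ≠ k → W * G i k = -(c * w i * w k) := by
    intro i k hik
    have h := hD0 i k
    simp only [hD, if_neg hik] at h
    linarith
  have hone : ((n:ℝ)+1) ≠ 0 := by positivity
  have hWne : W ≠ 0 := ne_of_gt hWpos
  have hcn : c * n = (n:ℝ) + 1 := by rw [hc]; field_simp
  have hw0sq : (0:ℝ) < (w 0)^2 := by nlinarith [hwsq 0, hWpos]
  have hw0ne : w 0 ≠ 0 := by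
    intro h; rw [h] at hw0sq; simp at hw0sq
  refine ⟨fun j => w j / w 0, fun j => ?_, ?_, ?_⟩
  · rw [← mul_self_eq_one_iff]
    have h1 := hwsq j; have h2 := hwsq 0
    field_simp
    nlinarith [h1, h2, hnpos]
  · have : ∑ j, (w j / w 0) • f j = (w 0)⁻¹ • ∑ j, w j • f j := by
      rw [Finset.smul_sum]
      refine Finset.sum_congr rfl fun j _ => ?_
      rw [smul_smul, div_eq_inv_mul]
    rw [this, hw0, smul_zero]
  · intro i j hij
    have hGv := hGoff i j hij
    rw [real_inner_smul_left, real_inner_smul_right]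
    have e2 : W * (w i * w j * G i j) = -(c * (w i)^2 * (w j)^2) := by
      linear_combination (w i * w j) * hGv
    have e6 : ((n:ℝ)+1) * W * ((n:ℝ) * (w i * w j * G i j) + (w 0)^2) = 0 := by
      linear_combination (n:ℝ)*((n:ℝ)+1)*e2 - ((n:ℝ)+1)*(w i)^2*(w j)^2*hcn
        - ((n:ℝ)+1)*(w j)^2*(hwsq i) - W*(hwsq j) + W*(hwsq 0)
    have e7 : (n:ℝ) * (w i * w j * G i j) + (w 0)^2 = 0 := by
      rcases mul_eq_zero.mp e6 with h | h
      · rcases mul_eq_zero.mp h with h' | h'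
        · exact absurd h' hone
        · exact absurd h' hWne
      · exact h
    show w i / w 0 * (w j / w 0 * G i j) = -(1/n)
    field_simp
    linear_combination e7

/-- Up to orthogonal transformations of `ℝⁿ` and sign changes of individual vectors,
there is exactly one spherical tight frame of `n+1` vectors in `ℝⁿ`. -/
theorem stmt10 (n : ℕ) (hn : 1 ≤ n)
    (f g : Fin (n + 1) → EuclideanSpace ℝ (Fin n))
    (hf1 : ∀ j, ‖f j‖ = 1) (hg1 : ∀ j, ‖g j‖ = 1)
    (hf : ∀ v : EuclideanSpace ℝ (Fin n),
      ∑ j, (inner ℝ v (f j) : ℝ) ^ 2 = (((n : ℝ) + 1) / n) * ‖v‖ ^ 2)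
    (hg : ∀ v : EuclideanSpace ℝ (Fin n),
      ∑ j, (inner ℝ v (g j) : ℝ) ^ 2 = (((n : ℝ) + 1) / n) * ‖v‖ ^ 2) :
    ∃ (U : EuclideanSpace ℝ (Fin n) ≃ₗᵢ[ℝ] EuclideanSpace ℝ (Fin n))
      (ε : Fin (n + 1) → ℝ), (∀ j, ε j = 1 ∨ ε j = -1) ∧
        ∀ j, g j = ε j • U (f j) := by
  have hn0 : (n : ℝ) ≠ 0 := Nat.cast_ne_zero.mpr (by omega)
  have hnpos : (0:ℝ) < n := by positivity
  haveI : Nonempty (Fin n) := ⟨⟨0, hn⟩⟩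
  obtain ⟨s, hs, hssum, hsG⟩ := frame_signs n hn f hf1 hf
  obtain ⟨t, ht, htsum, htG⟩ := frame_signs n hn g hg1 hg
  have hs2 : ∀ j, s j * s j = 1 := fun j => by rcases hs j with h | h <;> rw [h] <;> norm_num
  have ht2 : ∀ j, t j * t j = 1 := fun j => by rcases ht j with h | h <;> rw [h] <;> norm_num
  set f' : Fin (n+1) → EuclideanSpace ℝ (Fin n) := fun j => s j • f j with hf'
  set g' : Fin (n+1) → EuclideanSpace ℝ (Fin n) := fun j => t j • g j with hg'
  have hF : ∀ i j, (inner ℝ (f' i) (f' j) : ℝ) = if i = j then 1 else -(1/(n:ℝ)) := by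
    intro i j
    by_cases h : i = j
    · subst h
      rw [if_pos rfl]
      show (inner ℝ (s i • f i) (s i • f i) : ℝ) = 1
      rw [real_inner_smul_left, real_inner_smul_right, real_inner_self_eq_norm_sq, hf1 i]
      rw [one_pow, mul_one, hs2 i]
    · rw [if_neg h]; exact hsG i j h
  have hG : ∀ i j, (inner ℝ (g' i) (g' j) : ℝ) = if i = j then 1 else -(1/(n:ℝ)) := by
    intro i j
    by_cases h : i = j
    · subst h
      rw [if_pos rfl]
      show (inner ℝ (t i • g i) (t i • g i) : ℝ) = 1
      rw [real_inner_smul_left, real_inner_smul_right, real_inner_self_eq_norm_sq, hg1 i]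
      rw [one_pow, mul_one, ht2 i]
    · rw [if_neg h]; exact htG i j h
  -- linear independence of the first n vectors
  have hli : LinearIndependent ℝ (fun i : Fin n => f' (Fin.castSucc i)) := by
    rw [Fintype.linearIndependent_iff]
    intro a ha
    have hin : ∀ p : Fin (n+1),
        ∑ i, a i * (if p = Fin.castSucc i then (1:ℝ) else -(1/(n:ℝ))) = 0 := by
      intro p
      have h0 : (inner ℝ (f' p) (∑ i, a i • f' (Fin.castSucc i)) : ℝ) = 0 := by
        rw [ha]; exact inner_zero_right _
      rw [inner_sum] at h0
      rw [← h0]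
      refine Finset.sum_congr rfl fun i _ => ?_
      rw [real_inner_smul_right, hF]
    have hSum : ∑ i, a i = 0 := by
      have h1 := hin (Fin.last n)
      have h2 : ∀ i : Fin n, a i * (if Fin.last n = Fin.castSucc i then (1:ℝ) else -(1/(n:ℝ)))
          = a i * (-(1/(n:ℝ))) := by
        intro i
        rw [if_neg (Fin.castSucc_lt_last i).ne']
      rw [Finset.sum_congr rfl (fun i _ => h2 i), ← Finset.sum_mul] at h1
      rcases mul_eq_zero.mp h1 with h | h
      · exact h
      · exfalso; rw [neg_eq_zero] at h; exact hn0 (by field_simp at h; simp at h)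
    intro i₀
    have h1 := hin (Fin.castSucc i₀)
    have h2 : ∀ i : Fin n, a i * (if Fin.castSucc i₀ = Fin.castSucc i then (1:ℝ) else -(1/(n:ℝ)))
        = a i * (-(1/(n:ℝ))) + (if i₀ = i then a i * (1 + 1/n) else 0) := by
      intro i
      by_cases h : i₀ = i
      · subst h; rw [if_pos rfl, if_pos rfl]; ring
      · rw [if_neg (fun hc => h (Fin.castSucc_inj.mp hc)), if_neg h, add_zero]
    rw [Finset.sum_congr rfl (fun i _ => h2 i), Finset.sum_add_distrib, ← Finset.sum_mul,
      hSum, Finset.sum_ite_eq, if_pos (Finset.mem_univ i₀)] at h1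
    have : a i₀ * (1 + 1/n) = 0 := by linarith
    rcases mul_eq_zero.mp this with h | h
    · exact h
    · exfalso
      have hpos : (0:ℝ) < 1/n := by positivity
      linarith
  let b : Module.Basis (Fin n) ℝ (EuclideanSpace ℝ (Fin n)) :=
    basisOfLinearIndependentOfCardEqFinrank hli (by simp [finrank_euclideanSpace_fin])
  have hb : ∀ i, b i = f' (Fin.castSucc i) := fun i => by
    simp [b, coe_basisOfLinearIndependentOfCardEqFinrank]
  let L : EuclideanSpace ℝ (Fin n) →ₗ[ℝ] EuclideanSpace ℝ (Fin n) :=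
    b.constr ℝ (fun i => g' (Fin.castSucc i))
  have hLb : ∀ i, L (b i) = g' (Fin.castSucc i) := fun i =>
    b.constr_basis ℝ (fun i => g' (Fin.castSucc i)) i
  have key : ∀ i j, (inner ℝ (L (b i)) (L (b j)) : ℝ) = inner ℝ (b i) (b j) := by
    intro i j
    rw [hLb, hLb, hb, hb, hF, hG]
  have hLinner : ∀ u v : EuclideanSpace ℝ (Fin n), (inner ℝ (L u) (L v) : ℝ) = inner ℝ u v := by
    intro u v
    rw [← b.sum_repr u, ← b.sum_repr v]
    simp only [map_sum, map_smul, inner_sum, sum_inner, real_inner_smul_left,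
      real_inner_smul_right]
    refine Finset.sum_congr rfl fun i _ => Finset.sum_congr rfl fun j _ => ?_
    rw [key]
  let U : EuclideanSpace ℝ (Fin n) ≃ₗᵢ[ℝ] EuclideanSpace ℝ (Fin n) :=
    (LinearMap.isometryOfInner L hLinner).toLinearIsometryEquiv rfl
  have hUL : ∀ x, U x = L x := fun x => rfl
  have hU : ∀ j, U (f' j) = g' j := by
    intro j
    refine Fin.lastCases ?_ (fun i => ?_) j
    · have hfl : f' (Fin.last n) = -∑ i : Fin n, f' (Fin.castSucc i) := by
        have h := hssum
        rw [Fin.sum_univ_castSucc] at h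
        exact eq_neg_of_add_eq_zero_right h
      have hgl : g' (Fin.last n) = -∑ i : Fin n, g' (Fin.castSucc i) := by
        have h := htsum
        rw [Fin.sum_univ_castSucc] at h
        exact eq_neg_of_add_eq_zero_right h
      rw [hfl, hgl, hUL, map_neg, map_sum]
      congr 1
      refine Finset.sum_congr rfl fun i _ => ?_
      rw [← hb, hLb]
    · rw [hUL, ← hb, hLb]
  refine ⟨U, fun j => s j * t j, fun j => ?_, fun j => ?_⟩
  · rcases hs j with h1 | h1 <;> rcases ht j with h2 | h2 <;> simp [h1, h2]
  · have h := hU j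
    calc g j = (t j * t j) • g j := by rw [ht2 j, one_smul]
      _ = t j • (t j • g j) := by rw [mul_smul]
      _ = t j • (U (s j • f j)) := congrArg (fun x => t j • x) h.symm
      _ = t j • (s j • U (f j)) := by rw [map_smul]
      _ = (s j * t j) • U (f j) := by rw [smul_smul, mul_comm]
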